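/- The functor d! : sSet → ssSet (simplicial sets to bisimplicial sets) left adjoint to the diagonal, determined by d!(Δ^n) = Δ^n ⊗ Δ[n], admits a natural transformation d! → δ to the functor δ(K)_m = K (the constant-in-one-direction functor with δ(Δ^n) = Δ[n]), and for every simplicial set X the map d!(X) → δ(X) is a degreewise weak homotopy equivalence of simplicial spaces. -/

import Mathlib

open CategoryTheory Simplicial CategoryTheory.Limits

noncomputable section

/-- Simplicial spaces: simplicial objects in simplicial sets (i.e. bisimplicial sets with a
preferred direction). -/
abbrev SimplicialSpace : Type 1 := SimplexCategoryᵒᵖ ⥤ SSet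

/-- The diagonal functor from simplicial spaces to simplicial sets. -/
def diagFunctor : SimplicialSpace ⥤ SSet :=
  Functor.uncurry ⋙ (Functor.whiskeringLeft SimplexCategoryᵒᵖ (SimplexCategoryᵒᵖ × SimplexCategoryᵒᵖ)
    (Type 0)).obj (Functor.diag SimplexCategoryᵒᵖ)

/-- The functor `δ : sSet → ssSet` sending a simplicial set `K` to the simplicial space which in
simplicial degree `m` is the discrete (constant) simplicial set on the set `K_m`; it satisfies
`δ(Δ^n) = Δ[n]`, the standard simplex viewed as a simplicial discrete space. -/
def deltaFunctor : SSet ⥤ SimplicialSpace :=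
  (Functor.whiskeringRight SimplexCategoryᵒᵖ (Type 0) SSet).obj
    (Functor.const SimplexCategoryᵒᵖ)

/-- A map of simplicial sets is a weak homotopy equivalence iff its geometric realization is a
homotopy equivalence of topological spaces. -/
def IsWeakHomotopyEquiv {X Y : SSet} (f : X ⟶ Y) : Prop :=
  ∃ g : C(SSet.toTop.obj Y, SSet.toTop.obj X),
    ContinuousMap.Homotopic (((SSet.toTop.map f).hom : C(SSet.toTop.obj X, SSet.toTop.obj Y)).comp g)
      (ContinuousMap.id _) ∧
    ContinuousMap.Homotopic (g.comp ((SSet.toTop.map f).hom : C(SSet.toTop.obj X, SSet.toTop.obj Y)))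
      (ContinuousMap.id _)

namespace DShriekAux

open Opposite NNReal

/-- Objects indexing the canonical colimit presentation of `(d!X)_m`. -/
structure Idx (X : SSet.{0}) (m : SimplexCategoryᵒᵖ) : Type where
  n : SimplexCategory
  z : X.obj (op n)
  α : m.unop ⟶ n

/-- Morphisms of `Idx`. -/
@[ext]
structure IdxHom {X : SSet.{0}} {m : SimplexCategoryᵒᵖ} (c c' : Idx X m) : Type where
  f : c.n ⟶ c'.n
  hα : c.α ≫ f = c'.α
  hz : c.z = X.map f.op c'.z

instance (X : SSet.{0}) (m : SimplexCategoryᵒᵖ) : Category (Idx X m) where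
  Hom := IdxHom
  id c := ⟨𝟙 c.n, by simp, by simp⟩
  comp u v := ⟨u.f ≫ v.f, by rw [← Category.assoc, u.hα, v.hα],
    by rw [u.hz, v.hz, op_comp, FunctorToTypes.map_comp_apply]⟩
  id_comp u := by apply IdxHom.ext; simp
  comp_id u := by apply IdxHom.ext; simp
  assoc u v w := by apply IdxHom.ext; simp

@[simp] lemma id_f {X : SSet.{0}} {m : SimplexCategoryᵒᵖ} (c : Idx X m) :
    (𝟙 c : IdxHom c c).f = 𝟙 c.n := rfl

@[simp] lemma comp_f {X : SSet.{0}} {m : SimplexCategoryᵒᵖ} {c c' c'' : Idx X m}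
    (u : c ⟶ c') (v : c' ⟶ c'') : (u ≫ v).f = u.f ≫ v.f := rfl

/-- Elements presenting `(d!X)_{m,k}`. -/
def TD (X : SSet.{0}) (m k : SimplexCategoryᵒᵖ) : Type := Σ c : Idx X m, (k.unop ⟶ c.n)

/-- The relation generating the colimit identifications. -/
def relD (X : SSet.{0}) (m k : SimplexCategoryᵒᵖ) : TD X m k → TD X m k → Prop :=
  fun p q => ∃ u : p.1 ⟶ q.1, q.2 = p.2 ≫ u.f

/-- `(d!X)_{m,k}` as an explicit quotient. -/
def D (X : SSet.{0}) (m k : SimplexCategoryᵒᵖ) : Type := Quot (relD X m k)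



abbrev mk' {X : SSet.{0}} {m k : SimplexCategoryᵒᵖ} (p : TD X m k) : D X m k :=
  Quot.mk (relD X m k) p

/-- `(d!X)_m` as a simplicial set. -/
def DSSet (X : SSet.{0}) (m : SimplexCategoryᵒᵖ) : SSet.{0} where
  obj k := D X m k
  map {k k'} g := TypeCat.ofHom (Quot.map (fun (p : TD X m k) => (⟨p.1, g.unop ≫ p.2⟩ : TD X m k'))
    (fun p q h => by obtain ⟨u, hu⟩ := h; exact ⟨u, by dsimp only; rw [hu, Category.assoc]⟩))
  map_id k := by
    apply ConcreteCategory.hom_ext; intro p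
    induction p using Quot.ind with
    | _ p => exact congrArg mk' (by simp [TD]; rfl)
  map_comp g g' := by
    apply ConcreteCategory.hom_ext; intro p
    induction p using Quot.ind with
    | _ p => exact congrArg mk' (by simp [TD])

/-- `d!X` as a simplicial space. -/
def DObj (X : SSet.{0}) : SimplexCategoryᵒᵖ ⥤ SSet.{0} where
  obj m := DSSet X m
  map {m m'} h :=
    { app := fun k => TypeCat.ofHom (Quot.map
          (fun (p : TD X m k) => (⟨⟨p.1.n, p.1.z, h.unop ≫ p.1.α⟩, p.2⟩ : TD X m' k))
        (fun p q hr => by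
          obtain ⟨u, hu⟩ := hr
          exact ⟨⟨u.f, by rw [Category.assoc, u.hα], u.hz⟩, hu⟩))
      naturality := fun k k' g => by
        apply ConcreteCategory.hom_ext; intro p
        induction p using Quot.ind with
        | _ p => rfl }
  map_id m := by
    apply NatTrans.ext; funext k; apply ConcreteCategory.hom_ext; intro p
    induction p using Quot.ind with
    | _ p => exact congrArg mk' (by dsimp only; rw [unop_id, Category.id_comp]; rfl)
  map_comp h h' := by
    apply NatTrans.ext; funext k; apply ConcreteCategory.hom_ext; intro p
    induction p using Quot.ind with
    | _ p => exact congrArg mk' (by dsimp only; rw [unop_comp, Category.assoc])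

/-- The functor `d!`. -/
def dShriekF : SSet.{0} ⥤ (SimplexCategoryᵒᵖ ⥤ SSet.{0}) where
  obj X := DObj X
  map {X X'} φ :=
    { app := fun m =>
        { app := fun k => TypeCat.ofHom (Quot.map
              (fun (p : TD X m k) => (⟨⟨p.1.n, φ.app (op p.1.n) p.1.z, p.1.α⟩, p.2⟩ : TD X' m k))
            (fun p q hr => by
              obtain ⟨u, hu⟩ := hr
              refine ⟨⟨u.f, u.hα, ?_⟩, hu⟩
              dsimp only
              rw [u.hz]
              exact NatTrans.naturality_apply φ u.f.op q.1.z))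
          naturality := fun k k' g => by
            apply ConcreteCategory.hom_ext; intro p
            induction p using Quot.ind with
            | _ p => rfl }
      naturality := fun m m' h => by
        apply NatTrans.ext; funext k; apply ConcreteCategory.hom_ext; intro p
        induction p using Quot.ind with
        | _ p => rfl }
  map_id X := by
    apply NatTrans.ext; funext m
    apply NatTrans.ext; funext k; apply ConcreteCategory.hom_ext; intro p
    induction p using Quot.ind with
    | _ p => rfl
  map_comp φ φ' := by
    apply NatTrans.ext; funext m
    apply NatTrans.ext; funext k; apply ConcreteCategory.hom_ext; intro p
    induction p using Quot.ind with
    | _ p => rfl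



lemma rel_mk {X : SSet.{0}} {m k : SimplexCategoryᵒᵖ} (p q : TD X m k) (u : p.1 ⟶ q.1)
    (h : q.2 = p.2 ≫ u.f) : mk' p = mk' q :=
  Quot.sound ⟨u, h⟩

@[simp] lemma diag_obj_obj (W : SimplexCategoryᵒᵖ ⥤ SSet.{0}) (nn : SimplexCategoryᵒᵖ) :
    (diagFunctor.obj W).obj nn = (W.obj nn).obj nn := rfl

lemma diag_map_apply (W : SimplexCategoryᵒᵖ ⥤ SSet.{0}) {a b : SimplexCategoryᵒᵖ} (g : a ⟶ b)
    (x : (W.obj a).obj a) :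
    (diagFunctor.obj W).map g x = (W.obj b).map g ((W.map g).app a x) := rfl

/-- Forward direction of the hom equivalence. -/
def toDiag (X : SSet.{0}) (W : SimplexCategoryᵒᵖ ⥤ SSet.{0}) (σ : DObj X ⟶ W) :
    X ⟶ diagFunctor.obj W where
  app nn := TypeCat.ofHom fun z => (σ.app nn).app nn (mk' (X := X) ⟨⟨nn.unop, z, 𝟙 nn.unop⟩, 𝟙 nn.unop⟩)
  naturality nn nn' g := by
    apply ConcreteCategory.hom_ext; intro z
    show (σ.app nn').app nn' (mk' ⟨⟨nn'.unop, X.map g z, 𝟙 nn'.unop⟩, 𝟙 nn'.unop⟩)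
      = (diagFunctor.obj W).map g ((σ.app nn).app nn (mk' ⟨⟨nn.unop, z, 𝟙 nn.unop⟩, 𝟙 nn.unop⟩))
    have e1 : (mk' ⟨⟨nn'.unop, X.map g z, 𝟙 nn'.unop⟩, 𝟙 nn'.unop⟩ : D X nn' nn')
        = mk' ⟨⟨nn.unop, z, g.unop⟩, g.unop⟩ :=
      rel_mk _ _ ⟨g.unop, by simp, rfl⟩ (by simp)
    have e2 : (mk' ⟨⟨nn.unop, z, g.unop⟩, g.unop⟩ : D X nn' nn')
        = ((DObj X).map g).app nn' (((DObj X).obj nn).map g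
            (mk' ⟨⟨nn.unop, z, 𝟙 nn.unop⟩, 𝟙 nn.unop⟩)) :=
      congrArg mk' (by dsimp [DObj, DSSet]; rw [Category.comp_id])
    rw [e1, e2]
    set y := ((DObj X).obj nn).map g (mk' ⟨⟨nn.unop, z, 𝟙 nn.unop⟩, 𝟙 nn.unop⟩) with hy
    have e3 : (σ.app nn').app nn' (((DObj X).map g).app nn' y)
        = (W.map g).app nn' ((σ.app nn).app nn' y) :=
      ConcreteCategory.congr_hom (NatTrans.congr_app (σ.naturality g) nn') y
    rw [e3, hy]
    have e4 : (σ.app nn).app nn' (((DObj X).obj nn).map g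
          (mk' ⟨⟨nn.unop, z, 𝟙 nn.unop⟩, 𝟙 nn.unop⟩))
        = (W.obj nn).map g ((σ.app nn).app nn (mk' ⟨⟨nn.unop, z, 𝟙 nn.unop⟩, 𝟙 nn.unop⟩)) :=
      ConcreteCategory.congr_hom ((σ.app nn).naturality g) _
    rw [diag_map_apply, e4]
    exact ConcreteCategory.congr_hom ((W.map g).naturality g) _

/-- Backward direction of the hom equivalence. -/
def fromDiag (X : SSet.{0}) (W : SimplexCategoryᵒᵖ ⥤ SSet.{0}) (τ : X ⟶ diagFunctor.obj W) :
    DObj X ⟶ W where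
  app mm :=
    { app := fun kk => TypeCat.ofHom <| Quot.lift
        (fun (p : TD X mm kk) => (W.obj mm).map p.2.op ((W.map p.1.α.op).app (op p.1.n)
          (τ.app (op p.1.n) p.1.z)))
        (by
          rintro p q ⟨u, hu⟩
          dsimp only
          set a := τ.app (op q.1.n) q.1.z with ha
          set c := (W.map u.f.op).app (op q.1.n) a with hc
          have h1 : τ.app (op p.1.n) p.1.z = (W.obj (op p.1.n)).map u.f.op c := by
            rw [u.hz]
            exact ConcreteCategory.congr_hom (τ.naturality u.f.op) q.1.z
          have h2 : (W.map p.1.α.op).app (op p.1.n) ((W.obj (op p.1.n)).map u.f.op c)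
              = (W.obj mm).map u.f.op ((W.map p.1.α.op).app (op q.1.n) c) :=
            ConcreteCategory.congr_hom ((W.map p.1.α.op).naturality u.f.op) c
          have h3 : (W.map p.1.α.op).app (op q.1.n) c = (W.map q.1.α.op).app (op q.1.n) a := by
            rw [← u.hα, op_comp, Functor.map_comp]
            rfl
          have h4 : (W.obj mm).map p.2.op ((W.obj mm).map u.f.op
                ((W.map q.1.α.op).app (op q.1.n) a))
              = (W.obj mm).map (u.f.op ≫ p.2.op) ((W.map q.1.α.op).app (op q.1.n) a) :=
            (FunctorToTypes.map_comp_apply _ _ _ _).symm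
          rw [h1, h2, h3, h4, ← op_comp, ← hu])
      naturality := fun kk kk' g => by
        apply ConcreteCategory.hom_ext; intro p
        induction p using Quot.ind with
        | _ p =>
          show (W.obj mm).map (g.unop ≫ p.2).op _ = (W.obj mm).map g _
          rw [op_comp, Functor.map_comp]
          rfl }
  naturality mm mm' h := by
    apply NatTrans.ext; funext kk; apply ConcreteCategory.hom_ext; intro p
    induction p using Quot.ind with
    | _ p =>
      show (W.obj mm').map p.2.op ((W.map (h.unop ≫ p.1.α).op).app (op p.1.n)
          (τ.app (op p.1.n) p.1.z))
        = (W.map h).app kk ((W.obj mm).map p.2.op ((W.map p.1.α.op).app (op p.1.n)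
            (τ.app (op p.1.n) p.1.z)))
      rw [op_comp, Functor.map_comp]
      have e1 := ConcreteCategory.congr_hom ((W.map h).naturality p.2.op)
        ((W.map p.1.α.op).app (op p.1.n) (τ.app (op p.1.n) p.1.z))
      simp only [NatTrans.comp_app, types_comp_apply] at e1 ⊢
      exact e1.symm

lemma left_inv_aux (X : SSet.{0}) (W : SimplexCategoryᵒᵖ ⥤ SSet.{0}) (σ : DObj X ⟶ W) :
    fromDiag X W (toDiag X W σ) = σ := by
  apply NatTrans.ext; funext mm
  apply NatTrans.ext; funext kk; apply ConcreteCategory.hom_ext; intro p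
  induction p using Quot.ind with
  | _ p =>
    show (W.obj mm).map p.2.op ((W.map p.1.α.op).app (op p.1.n)
        ((σ.app (op p.1.n)).app (op p.1.n) (mk' ⟨⟨p.1.n, p.1.z, 𝟙 p.1.n⟩, 𝟙 p.1.n⟩)))
      = (σ.app mm).app kk (mk' p)
    have e1 : (σ.app mm).app (op p.1.n) (((DObj X).map p.1.α.op).app (op p.1.n)
          (mk' ⟨⟨p.1.n, p.1.z, 𝟙 p.1.n⟩, 𝟙 p.1.n⟩))
        = (W.map p.1.α.op).app (op p.1.n)
            ((σ.app (op p.1.n)).app (op p.1.n) (mk' ⟨⟨p.1.n, p.1.z, 𝟙 p.1.n⟩, 𝟙 p.1.n⟩)) :=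
      ConcreteCategory.congr_hom (NatTrans.congr_app (σ.naturality p.1.α.op) (op p.1.n)) _
    rw [← e1]
    have e2 : ((DObj X).map p.1.α.op).app (op p.1.n) (mk' ⟨⟨p.1.n, p.1.z, 𝟙 p.1.n⟩, 𝟙 p.1.n⟩)
        = mk' ⟨⟨p.1.n, p.1.z, p.1.α⟩, 𝟙 p.1.n⟩ :=
      congrArg mk' (by dsimp [DObj, DSSet]; rw [Category.comp_id])
    rw [e2]
    have e3 : (σ.app mm).app kk (((DObj X).obj mm).map p.2.op
          (mk' ⟨⟨p.1.n, p.1.z, p.1.α⟩, 𝟙 p.1.n⟩))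
        = (W.obj mm).map p.2.op ((σ.app mm).app (op p.1.n)
            (mk' ⟨⟨p.1.n, p.1.z, p.1.α⟩, 𝟙 p.1.n⟩)) :=
      ConcreteCategory.congr_hom ((σ.app mm).naturality p.2.op) _
    rw [← e3]
    have e4 : ((DObj X).obj mm).map p.2.op (mk' ⟨⟨p.1.n, p.1.z, p.1.α⟩, 𝟙 p.1.n⟩) = mk' p :=
      congrArg mk' (by dsimp [DObj, DSSet]; rw [Category.comp_id]; exact rfl)
    rw [e4]

lemma right_inv_aux (X : SSet.{0}) (W : SimplexCategoryᵒᵖ ⥤ SSet.{0})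
    (τ : X ⟶ diagFunctor.obj W) : toDiag X W (fromDiag X W τ) = τ := by
  apply NatTrans.ext; funext nn; apply ConcreteCategory.hom_ext; intro z
  show (W.obj nn).map (𝟙 nn.unop).op ((W.map (𝟙 nn.unop).op).app (op nn.unop)
      (τ.app (op nn.unop) z)) = τ.app nn z
  have : ((𝟙 nn.unop : nn.unop ⟶ nn.unop).op) = 𝟙 nn := rfl
  rw [this]
  simp only [CategoryTheory.Functor.map_id, NatTrans.id_app, types_id_apply]
  rfl

/-- The adjunction `d! ⊣ diag`. -/
def dShriekAdj : dShriekF ⊣ diagFunctor :=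
  Adjunction.mkOfHomEquiv
    { homEquiv := fun X W =>
        ⟨toDiag X W, fromDiag X W, left_inv_aux X W, right_inv_aux X W⟩
      homEquiv_naturality_left_symm := by
        intro X' X W φ τ
        apply NatTrans.ext; funext mm
        apply NatTrans.ext; funext kk; apply ConcreteCategory.hom_ext; intro p
        induction p using Quot.ind with
        | _ p => rfl
      homEquiv_naturality_right := by
        intro X W W' σ g
        apply NatTrans.ext; funext nn; apply ConcreteCategory.hom_ext; intro z
        rfl }

/-- The natural transformation `d! ⟶ δ`. -/
def etaNat : dShriekF ⟶ deltaFunctor where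
  app X :=
    { app := fun mm =>
        { app := fun kk => TypeCat.ofHom <| Quot.lift (fun (p : TD X mm kk) => X.map p.1.α.op p.1.z)
            (by
              rintro p q ⟨u, hu⟩
              dsimp only
              rw [u.hz, ← FunctorToTypes.map_comp_apply, ← op_comp, u.hα])
          naturality := fun kk kk' g => by
            apply ConcreteCategory.hom_ext; intro p
            induction p using Quot.ind with
            | _ p => rfl }
      naturality := fun mm mm' h => by
        apply NatTrans.ext; funext kk; apply ConcreteCategory.hom_ext; intro p
        induction p using Quot.ind with
        | _ p =>
          show X.map (h.unop ≫ p.1.α).op p.1.z = X.map h (X.map p.1.α.op p.1.z)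
          rw [op_comp, FunctorToTypes.map_comp_apply]
          rfl }
  naturality X X' φ := by
    apply NatTrans.ext; funext mm
    apply NatTrans.ext; funext kk; apply ConcreteCategory.hom_ext; intro p
    induction p using Quot.ind with
    | _ p =>
      show X'.map p.1.α.op (φ.app (op p.1.n) p.1.z) = φ.app mm (X.map p.1.α.op p.1.z)
      exact (NatTrans.naturality_apply φ p.1.α.op p.1.z).symm

variable (X : SSet.{0}) (m : SimplexCategoryᵒᵖ)

/-- The simplicial section of the degreewise augmentation. -/
def sect : (deltaFunctor.obj X).obj m ⟶ DSSet X m where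
  app kk := TypeCat.ofHom fun x => mk' (X := X) ⟨⟨m.unop, x, 𝟙 m.unop⟩, SimplexCategory.const kk.unop m.unop 0⟩
  naturality kk kk' g := by
    apply ConcreteCategory.hom_ext; intro x
    show mk' ⟨⟨m.unop, x, 𝟙 m.unop⟩, g.unop ≫ SimplexCategory.const kk.unop m.unop 0⟩
      = mk' ⟨⟨m.unop, x, 𝟙 m.unop⟩, SimplexCategory.const kk'.unop m.unop 0⟩
    exact congrArg (fun β => mk' ⟨⟨m.unop, x, 𝟙 m.unop⟩, β⟩)
      (SimplexCategory.Hom.ext _ _ rfl)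

/-- Degreewise component of `η`. -/
abbrev etaCmp : DSSet X m ⟶ (deltaFunctor.obj X).obj m := ((etaNat.app X).app m)

lemma sect_eta : sect X m ≫ etaCmp X m = 𝟙 _ := by
  apply NatTrans.ext; funext kk; apply ConcreteCategory.hom_ext; intro x
  show X.map (𝟙 m.unop).op x = x
  have : ((𝟙 m.unop : m.unop ⟶ m.unop).op) = 𝟙 m := rfl
  rw [this]; exact Functor.map_id_apply X m x

/-- The projection from the index category to the simplex category. -/
def PJ : Idx X m ⥤ SimplexCategory where
  obj c := c.n
  map u := u.f

/-- The canonical diagram presenting `(d!X)_m` as a colimit of simplices. -/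
def GD : Idx X m ⥤ SSet.{0} := PJ X m ⋙ SSet.stdSimplex

/-- The tautological cocone. -/
def kap : Cocone (GD X m) where
  pt := DSSet X m
  ι :=
    { app := fun c =>
        { app := fun kk => TypeCat.ofHom fun β => mk' (X := X) ⟨c, SSet.stdSimplex.objEquiv β⟩
          naturality := fun kk kk' g => rfl }
      naturality := fun c c' u => by
        apply NatTrans.ext; funext kk; apply ConcreteCategory.hom_ext; intro β
        exact (Quot.sound ⟨u, rfl⟩ : mk' (X := X) ⟨c, SSet.stdSimplex.objEquiv β⟩
            = mk' ⟨c', SSet.stdSimplex.objEquiv β ≫ u.f⟩).symm }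

/-- The tautological cocone is a colimit. -/
def kapIsColimit : IsColimit (kap X m) where
  desc s :=
    { app := fun kk => TypeCat.ofHom <| Quot.lift (fun (p : TD X m kk) => (s.ι.app p.1).app kk (SSet.stdSimplex.objEquiv.symm p.2))
        (by
          rintro p q ⟨u, hu⟩
          dsimp only
          have e := ConcreteCategory.congr_hom (NatTrans.congr_app (s.w u) kk)
              (SSet.stdSimplex.objEquiv.symm p.2)
          rw [hu]
          exact e.symm)
      naturality := fun kk kk' g => by
        apply ConcreteCategory.hom_ext (C := Type); intro p
        induction p using Quot.ind with
        | _ p => exact ConcreteCategory.congr_hom ((s.ι.app p.1).naturality g)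
                  (SSet.stdSimplex.objEquiv.symm p.2) }
  fac s c := by
    apply NatTrans.ext; funext kk; apply ConcreteCategory.hom_ext; intro β
    rfl
  uniq s mo hmo := by
    apply NatTrans.ext; funext kk; apply ConcreteCategory.hom_ext; intro p
    induction p using Quot.ind with
    | _ p => exact ConcreteCategory.congr_hom (NatTrans.congr_app (hmo p.1) kk)
              (SSet.stdSimplex.objEquiv.symm p.2)

/-! ### Topological interpolation on simplices -/

/-- The topological simplex as a subtype. -/
abbrev Tsx (x : SimplexCategory) : Type := stdSimplex ℝ (Fin (x.len + 1))

/-- Straight-line interpolation towards the `i`-th vertex. -/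
def intp0 (x : SimplexCategory) (i : Fin (x.len + 1)) (ts : Tsx x × unitInterval) : Tsx x :=
  ⟨(1 - (ts.2 : ℝ)) • (ts.1 : Fin (x.len + 1) → ℝ)
      + (ts.2 : ℝ) • (Pi.single i 1 : Fin (x.len + 1) → ℝ),
    convex_stdSimplex ℝ (Fin (x.len + 1)) ts.1.2 (single_mem_stdSimplex ℝ i)
      (sub_nonneg.2 ts.2.2.2) ts.2.2.1 (sub_add_cancel _ _)⟩

lemma intp0_coe (x : SimplexCategory) (i : Fin (x.len + 1)) (ts : Tsx x × unitInterval) :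
    ⇑(intp0 x i ts) = (1 - (ts.2 : ℝ)) • ⇑ts.1
      + (ts.2 : ℝ) • (Pi.single i 1 : Fin (x.len + 1) → ℝ) := rfl

lemma intp0_cont (x : SimplexCategory) (i : Fin (x.len + 1)) : Continuous (intp0 x i) := by
  apply Continuous.subtype_mk
  fun_prop

/-- Straight-line interpolation on the realization. -/
def intp (x : SimplexCategory) (i : Fin (x.len + 1)) :
    C(SimplexCategory.toTop.{0}.obj x × unitInterval, SimplexCategory.toTop.{0}.obj x) where
  toFun ts := (ULift.up (intp0 x i (ULift.down ts.1, ts.2)) : ULift (Tsx x))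
  continuous_toFun := continuous_uliftUp.comp ((intp0_cont x i).comp
    ((continuous_uliftDown.comp continuous_fst).prodMk continuous_snd))

lemma intp_zero (x : SimplexCategory) (i : Fin (x.len + 1))
    (t : SimplexCategory.toTop.{0}.obj x) : intp x i (t, 0) = t := by
  apply ULift.ext
  apply stdSimplex.ext
  show ⇑(intp0 x i (ULift.down t, 0)) = _
  rw [intp0_coe]
  simp

lemma intp_one (x : SimplexCategory) (i : Fin (x.len + 1))
    (t : SimplexCategory.toTop.{0}.obj x) :
    intp x i (t, 1) = (ULift.up (stdSimplex.vertex i) : ULift (Tsx x)) := by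
  apply ULift.ext
  apply stdSimplex.ext
  show ⇑(intp0 x i (ULift.down t, 1)) = _
  rw [intp0_coe]
  simp

lemma toTopMap_intp {x y : SimplexCategory} (f : x ⟶ y) (i : Fin (x.len + 1))
    (t : SimplexCategory.toTop.{0}.obj x) (s : unitInterval) :
    SimplexCategory.toTop.{0}.map f (intp x i (t, s))
      = intp y (f.toOrderHom i) (SimplexCategory.toTop.{0}.map f t, s) := by
  show (ULift.up (stdSimplex.map (ConcreteCategory.hom f) (intp0 x i (ULift.down t, s)))
      : ULift (Tsx y))
    = ULift.up (intp0 y (f.toOrderHom i) (stdSimplex.map (ConcreteCategory.hom f) (ULift.down t), s))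
  congr 1
  apply stdSimplex.ext
  have hv := congrArg (fun (v : stdSimplex ℝ (Fin (y.len + 1))) => (v : Fin (y.len + 1) → ℝ))
    (stdSimplex.map_vertex (S := ℝ) (ConcreteCategory.hom f) i)
  simp only [stdSimplex.map_coe, stdSimplex.vertex_coe] at hv
  rw [stdSimplex.map_coe, intp0_coe, intp0_coe, stdSimplex.map_coe, map_add, map_smul, map_smul,
    hv]
  rfl

lemma map_const_aux {n k : ℕ} (i : Fin k) (f : Fin n → Fin k) (hf : ∀ a, f a = i)
    (t : stdSimplex ℝ (Fin n)) : stdSimplex.map f t = stdSimplex.vertex i := by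
  apply stdSimplex.ext
  funext j
  rw [stdSimplex.map_coe, FunOnFinite.linearMap_apply_apply, stdSimplex.vertex_coe]
  by_cases h : i = j
  · subst h
    rw [Finset.filter_true_of_mem (fun a _ => hf a), stdSimplex.sum_eq_one]
    simp
  · rw [Finset.filter_false_of_mem (fun a _ => by rw [hf a]; exact h), Finset.sum_empty]
    rw [Pi.single_eq_of_ne (Ne.symm h)]

lemma toTopMap_const {x y : SimplexCategory} (i : Fin (y.len + 1))
    (t : SimplexCategory.toTop.{0}.obj x) :
    SimplexCategory.toTop.{0}.map (SimplexCategory.const x y i) t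
      = (ULift.up (stdSimplex.vertex i) : ULift (Tsx y)) := by
  show (ULift.up (stdSimplex.map (ConcreteCategory.hom (SimplexCategory.const x y i))
      (ULift.down t)) : ULift (Tsx y)) = _
  congr 1
  exact map_const_aux i _ (fun a => rfl) _

/-! ### The homotopy -/

instance : PreservesColimitsOfSize.{0,0} SSet.toTop :=
  sSetTopAdj.leftAdjoint_preservesColimits

variable (X : SSet.{0}) (m : SimplexCategoryᵒᵖ)

/-- The marked vertex. -/
def vtx (c : Idx X m) : Fin (c.n.len + 1) := c.α.toOrderHom 0

/-- Collapsing a component of the tautological cocone onto the marked vertex. -/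
lemma kap_r (c : Idx X m) :
    (kap X m).ι.app c ≫ (etaCmp X m ≫ sect X m)
      = SSet.stdSimplex.map (SimplexCategory.const c.n c.n (vtx X m c)) ≫ (kap X m).ι.app c := by
  apply NatTrans.ext; funext kk; apply ConcreteCategory.hom_ext; intro β
  show mk' (X := X) ⟨⟨m.unop, X.map c.α.op c.z, 𝟙 m.unop⟩, SimplexCategory.const kk.unop m.unop 0⟩
    = mk' ⟨c, SSet.stdSimplex.objEquiv β ≫ SimplexCategory.const c.n c.n (vtx X m c)⟩
  have comp1 : SSet.stdSimplex.objEquiv β ≫ SimplexCategory.const c.n c.n (vtx X m c)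
      = SimplexCategory.const kk.unop c.n (vtx X m c) :=
    SimplexCategory.Hom.ext _ _ rfl
  have comp2 : SimplexCategory.const kk.unop m.unop 0 ≫ c.α
      = SimplexCategory.const kk.unop c.n (vtx X m c) :=
    SimplexCategory.Hom.ext _ _ rfl
  rw [comp1]
  exact rel_mk _ _ ⟨c.α, Category.id_comp _, rfl⟩ comp2.symm

/-- The geometric realization of `(d!X)_m`. -/
abbrev YT : TopCat := SSet.toTop.obj (DSSet X m)

/-- The transported colimit cocone over topological simplices. -/
def cocone2 : Cocone (PJ X m ⋙ SimplexCategory.toTop.{0}) :=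
  (Cocone.precompose (Functor.isoWhiskerLeft (PJ X m) SSet.toTopSimplex.symm).hom).obj
    (SSet.toTop.mapCocone (kap X m))

/-- It is a colimit. -/
def t2 : IsColimit (cocone2 X m) :=
  (IsColimit.precomposeHomEquiv _ _).symm
    (isColimitOfPreserves SSet.toTop (kapIsColimit X m))

lemma cocone2_pt : (cocone2 X m).pt = YT X m := rfl

lemma cocone2_app (c : Idx X m) :
    (cocone2 X m).ι.app c
      = SSet.toTopSimplex.inv.app c.n ≫ SSet.toTop.map ((kap X m).ι.app c) := rfl

/-- The homotopy cocone. -/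
def hoCone : Cocone (PJ X m ⋙ SimplexCategory.toTop.{0}) where
  pt := TopCat.of C(unitInterval, YT X m)
  ι :=
    { app := fun c => TopCat.ofHom
        (ContinuousMap.comp ((cocone2 X m).ι.app c).hom
          (intp c.n (vtx X m c))).curry
      naturality := fun c c' u => by
        apply ConcreteCategory.hom_ext; intro t
        apply ContinuousMap.ext; intro s
        show (cocone2 X m).ι.app c'
            (intp c'.n (vtx X m c') (SimplexCategory.toTop.{0}.map u.f t, s))
          = (cocone2 X m).ι.app c (intp c.n (vtx X m c) (t, s))
        have hv : vtx X m c' = u.f.toOrderHom (vtx X m c) := by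
          dsimp [vtx]
          rw [← u.hα]
          rfl
        rw [hv]
        exact (congrArg (fun z => (cocone2 X m).ι.app c' z)
          (toTopMap_intp u.f (vtx X m c) t s)).symm.trans
          (ConcreteCategory.congr_hom ((cocone2 X m).ι.naturality u)
            (intp c.n (vtx X m c) (t, s))) }

/-- Descended map to the path space. -/
def hdesc : YT X m ⟶ TopCat.of C(unitInterval, YT X m) :=
  (t2 X m).desc (hoCone X m)

/-- The big homotopy. -/
def bigH : C(YT X m × unitInterval, YT X m) :=
  ContinuousMap.uncurry (hdesc X m).hom

lemma bigH_fac (c : Idx X m) (t : SimplexCategory.toTop.{0}.obj c.n) (s : unitInterval) :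
    bigH X m ((cocone2 X m).ι.app c t, s)
      = (cocone2 X m).ι.app c (intp c.n (vtx X m c) (t, s)) := by
  have hf := (t2 X m).fac (hoCone X m) c
  have := ConcreteCategory.congr_hom hf t
  exact congrArg (fun (q : C(unitInterval, YT X m)) => q s) this

lemma bigH_zero (y : YT X m) : bigH X m (y, 0) = y := by
  have E0 : TopCat.ofHom (ContinuousMap.mk (fun y => bigH X m (y, 0))
      ((bigH X m).continuous.comp (continuous_id.prodMk continuous_const)))
        = 𝟙 (YT X m) := by
    apply (t2 X m).hom_ext
    intro c
    apply ConcreteCategory.hom_ext; intro t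
    show bigH X m ((cocone2 X m).ι.app c t, 0) = (cocone2 X m).ι.app c t
    exact (bigH_fac X m c t 0).trans
      (congrArg (fun z => (cocone2 X m).ι.app c z) (intp_zero c.n _ t))
  exact ConcreteCategory.congr_hom E0 y

lemma bigH_one (y : YT X m) :
    bigH X m (y, 1) = SSet.toTop.map (etaCmp X m ≫ sect X m) y := by
  have E1 : TopCat.ofHom (ContinuousMap.mk (fun y => bigH X m (y, 1))
      ((bigH X m).continuous.comp (continuous_id.prodMk continuous_const)))
        = SSet.toTop.map (etaCmp X m ≫ sect X m) := by
    apply (t2 X m).hom_ext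
    intro c
    have key : SSet.toTopSimplex.inv.app c.n ≫ (SSet.toTop.map ((kap X m).ι.app c)
              ≫ SSet.toTop.map (etaCmp X m ≫ sect X m))
        = SimplexCategory.toTop.{0}.map (SimplexCategory.const c.n c.n (vtx X m c))
          ≫ (SSet.toTopSimplex.inv.app c.n ≫ SSet.toTop.map ((kap X m).ι.app c)) := by
      exact ((congrArg (SSet.toTopSimplex.inv.app c.n ≫ ·)
          (SSet.toTop.map_comp _ _).symm).trans
        (congrArg (fun g => SSet.toTopSimplex.inv.app c.n ≫ SSet.toTop.map g)
          (kap_r X m c))).trans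
        (((congrArg (SSet.toTopSimplex.inv.app c.n ≫ ·) (SSet.toTop.map_comp _ _)).trans
          (Category.assoc _ _ _).symm).trans
        ((congrArg (· ≫ SSet.toTop.map ((kap X m).ι.app c))
          (SSet.toTopSimplex.inv.naturality _).symm).trans (Category.assoc _ _ _)))
    refine Eq.trans ?_ key.symm
    apply ConcreteCategory.hom_ext; intro t
    show bigH X m ((cocone2 X m).ι.app c t, 1)
      = (cocone2 X m).ι.app c (SimplexCategory.toTop.{0}.map
          (SimplexCategory.const c.n c.n (vtx X m c)) t)
    exact (bigH_fac X m c t 1).trans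
      ((congrArg (fun z => (cocone2 X m).ι.app c z) (intp_one c.n _ t)).trans
        (congrArg (fun z => (cocone2 X m).ι.app c z) (toTopMap_const (vtx X m c) t).symm))
  exact ConcreteCategory.congr_hom E1 y

/-- The key homotopy statement. -/
lemma homotopic_r :
    ContinuousMap.Homotopic (ContinuousMap.id (YT X m))
      ((SSet.toTop.map (etaCmp X m ≫ sect X m)).hom) := by
  refine ⟨{ toContinuousMap := (bigH X m).comp ⟨Prod.swap, continuous_swap⟩
            map_zero_left := ?_
            map_one_left := ?_ }⟩
  · intro y
    exact bigH_zero X m y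
  · intro y
    exact bigH_one X m y

end DShriekAux

/-- The functor `d! : sSet → ssSet` left adjoint to the diagonal admits a natural transformation
`d! → δ` to the constant-direction functor `δ`, which is a degreewise weak homotopy equivalence
of simplicial spaces on every simplicial set `X`. -/
theorem dShriek_to_delta_degreewise_weakEquiv :
    ∃ (dShriek : SSet ⥤ SimplicialSpace) (_ : dShriek ⊣ diagFunctor)
      (η : dShriek ⟶ deltaFunctor),
      ∀ (X : SSet) (m : SimplexCategoryᵒᵖ),
        IsWeakHomotopyEquiv ((η.app X).app m) := by
  refine ⟨DShriekAux.dShriekF, DShriekAux.dShriekAdj, DShriekAux.etaNat, ?_⟩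
  intro X m
  refine ⟨(SSet.toTop.map (DShriekAux.sect X m)).hom, ?_, ?_⟩
  · have h1 : SSet.toTop.map (DShriekAux.sect X m)
          ≫ SSet.toTop.map ((DShriekAux.etaNat.app X).app m)
        = 𝟙 (SSet.toTop.obj ((deltaFunctor.obj X).obj m)) := by
      have := congrArg SSet.toTop.map (DShriekAux.sect_eta X m)
      rw [Functor.map_comp, CategoryTheory.Functor.map_id] at this
      exact this
    have h2 : (SSet.toTop.map ((DShriekAux.etaNat.app X).app m)).hom.comp
        (SSet.toTop.map (DShriekAux.sect X m)).hom = ContinuousMap.id _ := by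
      have := congrArg TopCat.Hom.hom h1
      exact this
    rw [h2]
  · have h3 : (SSet.toTop.map (DShriekAux.sect X m)).hom.comp
        (SSet.toTop.map ((DShriekAux.etaNat.app X).app m)).hom
        = (SSet.toTop.map (DShriekAux.etaCmp X m ≫ DShriekAux.sect X m)).hom := by
      exact (congrArg TopCat.Hom.hom
        (SSet.toTop.map_comp (DShriekAux.etaCmp X m) (DShriekAux.sect X m))).symm
    exact h3.symm ▸ (DShriekAux.homotopic_r X m).symm


end
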